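/- Let C be the class of hereditary sets A such that (i) every element of A is either ∅ or {x} for some x ∈ A, and (ii) there is a well-ordering < of the elements of A such that x < {x} whenever both x and {x} are elements of A. Then the class ⋃C of all sets belonging to some member of C contains ∅, is closed under x ↦ {x}, and every subclass of ⋃C that contains ∅ and is closed under x ↦ {x} contains every member of ⋃C; hence (⋃C, ∅, x ↦ {x}) is a simply infinite system. -/

import Mathlib

/-- The class `C` of sets `A` all of whose elements are `∅` or singletons of
elements, and which carry a well-ordering `<` of their elements satisfying
`x < {x}` whenever both `x` and `{x}` are elements. -/
def ZmWO : Set ZFSet :=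
  {A | (∀ y ∈ A, y = ∅ ∨ ∃ x ∈ A, y = ({x} : ZFSet)) ∧
    ∃ r : ZFSet → ZFSet → Prop,
      (∀ x ∈ A, ¬ r x x) ∧
      (∀ x ∈ A, ∀ y ∈ A, ∀ z ∈ A, r x y → r y z → r x z) ∧
      (∀ x ∈ A, ∀ y ∈ A, r x y ∨ x = y ∨ r y x) ∧
      (∀ b : ZFSet, b ⊆ A → b ≠ ∅ → ∃ m ∈ b, ∀ y ∈ b, ¬ r y m) ∧
      (∀ x ∈ A, ({x} : ZFSet) ∈ A → r x ({x} : ZFSet))}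

/-- The union class of `ZmWO`. -/
def UZmWO : Set ZFSet := {z | ∃ A ∈ ZmWO, z ∈ A}


/-- Zermelo numerals. -/
def Zerm : ℕ → ZFSet
  | 0 => ∅
  | n + 1 => {Zerm n}

lemma zerm_succ_ne_empty (n : ℕ) : Zerm (n + 1) ≠ ∅ := by
  intro h
  have : Zerm n ∈ (∅ : ZFSet) := by
    rw [← h]; exact ZFSet.mem_singleton.mpr rfl
  exact ZFSet.notMem_empty _ this

lemma singleton_inj {x y : ZFSet} (h : ({x} : ZFSet) = {y}) : x = y := by
  have : x ∈ ({y} : ZFSet) := by rw [← h]; exact ZFSet.mem_singleton.mpr rfl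
  exact ZFSet.mem_singleton.mp this

lemma zerm_inj : ∀ n m : ℕ, Zerm n = Zerm m → n = m := by
  intro n
  induction n with
  | zero =>
    intro m h
    cases m with
    | zero => rfl
    | succ m => exact absurd h.symm (zerm_succ_ne_empty m)
  | succ n ih =>
    intro m h
    cases m with
    | zero => exact absurd h (zerm_succ_ne_empty n)
    | succ m => exact congrArg Nat.succ (ih m (singleton_inj h))

/-- Finite initial segments of the Zermelo numerals. -/
def ZA : ℕ → ZFSet
  | 0 => {(∅ : ZFSet)}
  | n + 1 => insert (Zerm (n + 1)) (ZA n)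

lemma mem_ZA {z : ZFSet} : ∀ {n : ℕ}, z ∈ ZA n ↔ ∃ k ≤ n, z = Zerm k := by
  intro n
  induction n with
  | zero =>
    simp only [ZA, ZFSet.mem_singleton]
    constructor
    · intro h; exact ⟨0, le_refl _, h⟩
    · rintro ⟨k, hk, rfl⟩
      interval_cases k
      rfl
  | succ n ih =>
    simp only [ZA, ZFSet.mem_insert_iff, ih]
    constructor
    · rintro (rfl | ⟨k, hk, rfl⟩)
      · exact ⟨n + 1, le_refl _, rfl⟩
      · exact ⟨k, Nat.le_succ_of_le hk, rfl⟩
    · rintro ⟨k, hk, rfl⟩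
      rcases Nat.lt_or_ge k (n + 1) with h | h
      · exact Or.inr ⟨k, Nat.lt_succ_iff.mp h, rfl⟩
      · left; congr 1; omega

/-- The relation used as the well-ordering: comparison of Zermelo indices. -/
def zr (x y : ZFSet) : Prop := ∃ i j : ℕ, i < j ∧ x = Zerm i ∧ y = Zerm j

lemma ZA_mem_ZmWO (n : ℕ) : ZA n ∈ ZmWO := by
  constructor
  · intro y hy
    rcases mem_ZA.mp hy with ⟨k, hk, rfl⟩
    cases k with
    | zero => exact Or.inl rfl
    | succ k =>
      exact Or.inr ⟨Zerm k, mem_ZA.mpr ⟨k, by omega, rfl⟩, rfl⟩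
  · refine ⟨zr, ?_, ?_, ?_, ?_, ?_⟩
    · rintro x _ ⟨i, j, hij, rfl, h2⟩
      exact absurd (zerm_inj i j h2) (Nat.ne_of_lt hij)
    · rintro x _ y _ z _ ⟨i, j, hij, rfl, rfl⟩ ⟨j', k, hjk, hj, rfl⟩
      have := zerm_inj j j' hj
      exact ⟨i, k, by omega, rfl, rfl⟩
    · intro x hx y hy
      rcases mem_ZA.mp hx with ⟨i, _, rfl⟩
      rcases mem_ZA.mp hy with ⟨j, _, rfl⟩
      rcases lt_trichotomy i j with h | h | h
      · exact Or.inl ⟨i, j, h, rfl, rfl⟩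
      · exact Or.inr (Or.inl (by rw [h]))
      · exact Or.inr (Or.inr ⟨j, i, h, rfl, rfl⟩)
    · intro b hb hne
      rcases ZFSet.eq_empty_or_nonempty b with h | ⟨w, hw⟩
      · exact absurd h hne
      rcases mem_ZA.mp (hb hw) with ⟨k0, _, rfl⟩
      have hex : ∃ k : ℕ, Zerm k ∈ b := ⟨k0, hw⟩
      classical
      let m := Nat.find hex
      refine ⟨Zerm m, Nat.find_spec hex, ?_⟩
      rintro y hy ⟨i, j, hij, rfl, hj⟩
      have : j = m := zerm_inj j m hj.symm
      subst this
      exact Nat.find_min hex (by omega : i < m) hy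
    · intro x hx hsx
      rcases mem_ZA.mp hx with ⟨i, _, rfl⟩
      exact ⟨i, i + 1, Nat.lt_succ_self i, rfl, rfl⟩

/-- Every member of a set in `ZmWO` is a Zermelo numeral. -/
lemma mem_of_ZmWO {A : ZFSet} (hA : A ∈ ZmWO) : ∀ x ∈ A, ∃ n, x = Zerm n := by
  obtain ⟨h1, r, hirr, htr, htot, hwf, hsucc⟩ := hA
  by_contra hcon
  push_neg at hcon
  obtain ⟨x0, hx0, hx0n⟩ := hcon
  set b : ZFSet := ZFSet.sep (fun y => ¬ ∃ n, y = Zerm n) A with hbdef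
  have hbsub : b ⊆ A := fun z hz => (ZFSet.mem_sep.mp hz).1
  have hbne : b ≠ ∅ := by
    intro h
    have : x0 ∈ b := ZFSet.mem_sep.mpr ⟨hx0, by push_neg; exact hx0n⟩
    rw [h] at this
    exact ZFSet.notMem_empty _ this
  obtain ⟨m, hmb, hmin⟩ := hwf b hbsub hbne
  have hmA : m ∈ A := hbsub hmb
  have hmn : ¬ ∃ n, m = Zerm n := (ZFSet.mem_sep.mp hmb).2
  rcases h1 m hmA with rfl | ⟨x, hxA, rfl⟩
  · exact hmn ⟨0, rfl⟩
  · by_cases hx : ∃ n, x = Zerm n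
    · obtain ⟨n, rfl⟩ := hx
      exact hmn ⟨n + 1, rfl⟩
    · have hxb : x ∈ b := ZFSet.mem_sep.mpr ⟨hxA, hx⟩
      exact hmin x hxb (hsucc x hxA hmA)

lemma mem_UZmWO_iff {z : ZFSet} : z ∈ UZmWO ↔ ∃ n, z = Zerm n := by
  constructor
  · rintro ⟨A, hA, hz⟩
    exact mem_of_ZmWO hA z hz
  · rintro ⟨n, rfl⟩
    exact ⟨ZA n, ZA_mem_ZmWO n, mem_ZA.mpr ⟨n, le_refl _, rfl⟩⟩

/-- `(⋃C, ∅, x ↦ {x})` is a simply infinite system: it contains `∅`, is closed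
under `x ↦ {x}`, admits induction, `∅` is not in the range of `x ↦ {x}`, and
`x ↦ {x}` is injective on it. -/
theorem uZmWO_simply_infinite :
    (∅ : ZFSet) ∈ UZmWO ∧
      (∀ x ∈ UZmWO, ({x} : ZFSet) ∈ UZmWO) ∧
      (∀ D : Set ZFSet, D ⊆ UZmWO → (∅ : ZFSet) ∈ D →
        (∀ x ∈ D, ({x} : ZFSet) ∈ D) → ∀ z ∈ UZmWO, z ∈ D) ∧
      (∀ x ∈ UZmWO, ({x} : ZFSet) ≠ ∅) ∧
      (∀ x ∈ UZmWO, ∀ y ∈ UZmWO, ({x} : ZFSet) = ({y} : ZFSet) → x = y) := by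
  refine ⟨?_, ?_, ?_, ?_, ?_⟩
  · exact mem_UZmWO_iff.mpr ⟨0, rfl⟩
  · intro x hx
    rcases mem_UZmWO_iff.mp hx with ⟨n, rfl⟩
    exact mem_UZmWO_iff.mpr ⟨n + 1, rfl⟩
  · intro D _ hD0 hDs z hz
    rcases mem_UZmWO_iff.mp hz with ⟨n, rfl⟩
    clear hz
    induction n with
    | zero => exact hD0
    | succ n ih => exact hDs (Zerm n) ih
  · intro x _ h
    have : x ∈ (∅ : ZFSet) := by rw [← h]; exact ZFSet.mem_singleton.mpr rfl
    exact ZFSet.notMem_empty _ this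
  · intro x _ y _ h
    exact singleton_inj h
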